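/- Let A be an abelian group that is not cotorsion and let λ be a cardinal with λ > ℵ₀. Then there exists a directed poset 𝒯 with |𝒯| = λ and a diagram X : 𝒯 → Set_* of finite pointed sets such that the cokernel H(X,A) of the natural map ρ is not cotorsion. Concretely, one may take 𝒯 to be the poset of finite nonempty subsets of λ ordered by inclusion, and X(s) = s₊ (the set s with a disjoint basepoint), the map X(t) → X(s) for s ⊆ t being the identity on s and the basepoint elsewhere; then H(X,A) ≅ (∏_{α<λ} A)/(⊕_{α<λ} A), and this group is not cotorsion. -/

import Mathlib

open CategoryTheory Finsupp

universe u v w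

/-- The smash product `Y ∧ A` of a pointed set `(Y, y0)` with an abelian group `A`:
the group of finitely supported functions `Y →₀ A` vanishing at the basepoint,
i.e. `⊕_{y ∈ Y∖{y0}} A`. -/
def Smash (Y : Type u) (y0 : Y) (A : Type v) [AddCommGroup A] :
    AddSubgroup (Y →₀ A) where
  carrier := {f | f y0 = 0}
  add_mem' := by
    intro a b ha hb
    simp only [Set.mem_setOf_eq, Finsupp.add_apply] at *
    rw [ha, hb, add_zero]
  zero_mem' := by simp
  neg_mem' := by
    intro a ha
    simp only [Set.mem_setOf_eq, Finsupp.neg_apply] at *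
    rw [ha, neg_zero]

theorem mem_smash {Y : Type u} {y0 : Y} {A : Type v} [AddCommGroup A] {f : Y →₀ A} :
    f ∈ Smash Y y0 A ↔ f y0 = 0 := Iff.rfl

/-- The pushforward homomorphism `g_* : Y∧A → Z∧A` induced by a (pointed) map
`g : Y → Z`: `(g_* f)(z) = ∑_{y : g y = z} f y` for `z ≠ z0`, and `(g_* f)(z0) = 0`. -/
noncomputable def smashMap {Y : Type u} {Z : Type v} (y0 : Y) (z0 : Z) (g : Y → Z)
    (A : Type w) [AddCommGroup A] :
    Smash Y y0 A →+ Smash Z z0 A where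
  toFun f := ⟨(Finsupp.mapDomain g f.1).erase z0, Finsupp.erase_same⟩
  map_zero' := by
    apply Subtype.ext
    simp
  map_add' f₁ f₂ := by
    apply Subtype.ext
    show (Finsupp.mapDomain g ((f₁ : Y →₀ A) + (f₂ : Y →₀ A))).erase z0 = _
    rw [Finsupp.mapDomain_add, Finsupp.erase_add]
    rfl

theorem smashMap_comp {Y : Type u} {Z : Type v} {W : Type w} (y0 : Y) (z0 : Z) (w0 : W)
    (g : Y → Z) (g' : Z → W) (hg' : g' z0 = w0)
    (A : Type*) [AddCommGroup A] (f : Smash Y y0 A) :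
    smashMap z0 w0 g' A (smashMap y0 z0 g A f) = smashMap y0 w0 (g' ∘ g) A f := by
  classical
  apply Subtype.ext
  show (Finsupp.mapDomain g' ((Finsupp.mapDomain g f.1).erase z0)).erase w0
      = (Finsupp.mapDomain (g' ∘ g) f.1).erase w0
  rw [Finsupp.mapDomain_comp]
  set h := Finsupp.mapDomain g f.1 with hh
  have key : Finsupp.mapDomain g' (h.erase z0)
      = Finsupp.mapDomain g' h - Finsupp.single w0 (h z0) := by
    have h1 : h.erase z0 = h - Finsupp.single z0 (h z0) := by
      ext a
      by_cases ha : a = z0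
      · subst ha; simp
      · simp [Finsupp.erase_ne ha, Finsupp.single_apply, Ne.symm ha, ha]
    rw [h1]
    have h2 := map_sub (Finsupp.mapDomain.addMonoidHom g') h (Finsupp.single z0 (h z0))
    simp only [Finsupp.mapDomain.addMonoidHom_apply] at h2
    rw [h2, Finsupp.mapDomain_single, hg']
  rw [key]
  ext a
  by_cases ha : a = w0
  · subst ha; simp
  · simp [Finsupp.erase_ne ha, Finsupp.single_apply, Ne.symm ha, ha]
/-- The inverse limit of a diagram of pointed sets, as a subset of the product. -/
def plim {D : Type u} [Category.{v} D] (F : D ⥤ Pointed.{w}) :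
    Set (∀ d : D, (F.obj d).X) :=
  {x | ∀ ⦃d d' : D⦄ (u : d ⟶ d'), (F.map u).toFun (x d) = x d'}

/-- The basepoint of the inverse limit of a diagram of pointed sets. -/
def plimPt {D : Type u} [Category.{v} D] (F : D ⥤ Pointed.{w}) : plim F :=
  ⟨fun d => (F.obj d).point, fun _ _ u => (F.map u).map_point⟩

/-- The inverse limit `lim_D (X ∧ A)` of the diagram of abelian groups obtained by
smashing a diagram of pointed sets with an abelian group `A`. -/
noncomputable def glim {D : Type u} [Category.{v} D] (F : D ⥤ Pointed.{w})
    (A : Type*) [AddCommGroup A] :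
    AddSubgroup (∀ d : D, Smash (F.obj d).X (F.obj d).point A) where
  carrier := {h | ∀ ⦃d d' : D⦄ (u : d ⟶ d'),
      smashMap (F.obj d).point (F.obj d').point (F.map u).toFun A (h d) = h d'}
  add_mem' := by
    intro a b ha hb d d' u
    rw [Pi.add_apply, map_add, ha u, hb u]
    rfl
  zero_mem' := by
    intro d d' u
    rw [Pi.zero_apply, map_zero]
    rfl
  neg_mem' := by
    intro a ha d d' u
    rw [Pi.neg_apply, map_neg, ha u]
    rfl

/-- The natural map `ρ : (lim_D X) ∧ A → lim_D (X ∧ A)`, whose component at `d`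
is induced by the projection `lim_D X → X d`. -/
noncomputable def rho {D : Type u} [Category.{v} D] (F : D ⥤ Pointed.{w})
    (A : Type*) [AddCommGroup A] :
    Smash (plim F) (plimPt F) A →+ glim F A where
  toFun f := ⟨fun d => smashMap (plimPt F) (F.obj d).point (fun x => x.1 d) A f, by
    intro d d' u
    rw [smashMap_comp (plimPt F) (F.obj d).point (F.obj d').point _ _ (F.map u).map_point A f]
    have : ((F.map u).toFun ∘ fun x : plim F => x.1 d) = fun x : plim F => x.1 d' := by
      funext x
      exact x.2 u
    rw [this]⟩
  map_zero' := by
    apply Subtype.ext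
    funext d
    show smashMap (plimPt F) (F.obj d).point (fun x => x.1 d) A 0 = (0 : Smash _ _ A)
    exact map_zero _
  map_add' f₁ f₂ := by
    apply Subtype.ext
    funext d
    show smashMap (plimPt F) (F.obj d).point (fun x => x.1 d) A (f₁ + f₂)
        = smashMap (plimPt F) (F.obj d).point (fun x => x.1 d) A f₁
          + smashMap (plimPt F) (F.obj d).point (fun x => x.1 d) A f₂
    exact map_add _ f₁ f₂
/-- `C` is cotorsion, i.e. `Ext¹_ℤ(ℚ, C) = 0`.  Applying `Hom(-, C)` to the standard
free presentation `0 → ⊕_{n ∈ ℕ} ℤ → ⊕_{n ∈ ℕ} ℤ → ℚ → 0` (where the first map sends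
`e_n ↦ e_n - (n+1)·e_{n+1}`) identifies `Ext¹_ℤ(ℚ, C)` with the cokernel of
`C^ℕ → C^ℕ, (x_n) ↦ (x_n - (n+1)x_{n+1})`; hence `Ext¹_ℤ(ℚ, C) = 0` iff every system
of equations `x_n - (n+1)·x_{n+1} = a_n` (`n ∈ ℕ`) is solvable in `C`. -/
def Cotorsion (C : Type*) [AddCommGroup C] : Prop :=
  ∀ a : ℕ → C, ∃ x : ℕ → C, ∀ n : ℕ, x n - (n + 1) • x (n + 1) = a n
/-- A diagram of pointed sets indexed by a (nonempty) directed poset `T`, i.e. a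
functor `Tᵒᵖ ⥤ Set_*` (with structure maps `X(t) → X(s)` for `t ≥ s`). -/
structure DirectedDiagram : Type (u + 1) where
  T : Type u
  [po : PartialOrder T]
  [dir : IsDirected T (· ≤ ·)]
  [ne : Nonempty T]
  F : Tᵒᵖ ⥤ Pointed.{u}

attribute [instance] DirectedDiagram.po DirectedDiagram.dir DirectedDiagram.ne
-- construction part
noncomputable section Constr
open scoped Classical

variable {ι : Type}

abbrev TT (ι : Type) : Type := {s : Finset ι // s.Nonempty}

instance : IsDirected (TT ι) (· ≤ ·) := by
  letI := Classical.decEq ι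
  exact ⟨fun s t => ⟨⟨s.1 ∪ t.1, s.2.inl⟩, Finset.subset_union_left, Finset.subset_union_right⟩⟩

instance [Nonempty ι] : Nonempty (TT ι) :=
  ⟨⟨{Classical.arbitrary ι}, Finset.singleton_nonempty _⟩⟩

def res {s t : Finset ι} (_ : t ⊆ s) : Option {x // x ∈ s} → Option {x // x ∈ t} :=
  fun o => o.bind fun x => if hx : x.1 ∈ t then some ⟨x.1, hx⟩ else none

theorem res_none {s t : Finset ι} (h : t ⊆ s) : res h none = none := rfl

theorem res_some {s t : Finset ι} (h : t ⊆ s) (x : {x // x ∈ s}) :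
    res h (some x) = if hx : x.1 ∈ t then some ⟨x.1, hx⟩ else none := rfl

def FF (ι : Type) : (TT ι)ᵒᵖ ⥤ Pointed.{0} where
  obj d := ⟨Option {x // x ∈ d.unop.1}, none⟩
  map {d d'} u := ⟨res (leOfHom u.unop), rfl⟩
  map_id d := by
    apply Pointed.Hom.ext
    funext o
    cases o with
    | none => rfl
    | some x => simp [res_some, x.2]
  map_comp {d d' d''} u v := by
    apply Pointed.Hom.ext
    funext o
    cases o with
    | none => rfl
    | some x =>
      have hsub : d''.unop.1 ⊆ d'.unop.1 := leOfHom v.unop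
      show res (leOfHom (u ≫ v).unop) (some x) = res (leOfHom v.unop) (res (leOfHom u.unop) (some x))
      by_cases hx : x.1 ∈ d''.unop.1
      · have hx' : x.1 ∈ d'.unop.1 := hsub hx
        simp [res_some, hx, hx']
      · by_cases hx' : x.1 ∈ d'.unop.1
        · simp [res_some, res_none, hx, hx']
        · simp [res_some, res_none, hx, hx']

end Constr
open scoped Classical
-- general smashMap evaluation lemmas
theorem smash_apply_point {Y : Type u} {y0 : Y} {A : Type v} [AddCommGroup A]
    (f : Smash Y y0 A) : (f : Y →₀ A) y0 = 0 := f.2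

theorem smashMap_apply_ne {Y : Type u} {Z : Type v} (y0 : Y) (z0 : Z) (g : Y → Z)
    (A : Type w) [AddCommGroup A] (f : Smash Y y0 A) {z : Z} (hz : z ≠ z0) :
    ((smashMap y0 z0 g A f : Smash Z z0 A) : Z →₀ A) z
      = ∑ a ∈ (f : Y →₀ A).support, if g a = z then (f : Y →₀ A) a else 0 := by
  classical
  show ((Finsupp.mapDomain g (f : Y →₀ A)).erase z0) z = _
  rw [Finsupp.erase_ne hz, Finsupp.mapDomain, Finsupp.sum_apply]
  simp [Finsupp.sum, Finsupp.single_apply]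

theorem smashMap_apply_unique {Y : Type u} {Z : Type v} (y0 : Y) (z0 : Z) (g : Y → Z)
    (A : Type w) [AddCommGroup A] (f : Smash Y y0 A) {z : Z} (hz : z ≠ z0)
    (a0 : Y) (ha : g a0 = z) (hu : ∀ a, g a = z → a = a0) :
    ((smashMap y0 z0 g A f : Smash Z z0 A) : Z →₀ A) z = (f : Y →₀ A) a0 := by
  classical
  rw [smashMap_apply_ne y0 z0 g A f hz]
  have hcong : ∀ a ∈ (f : Y →₀ A).support,
      (if g a = z then (f : Y →₀ A) a else 0) = if a = a0 then (f : Y →₀ A) a else 0 := by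
    intro a _
    congr 1
    simp only [eq_iff_iff]
    exact ⟨fun h => hu a h, fun h => h ▸ ha⟩
  rw [Finset.sum_congr rfl hcong, Finset.sum_ite_eq']
  by_cases h : a0 ∈ (f : Y →₀ A).support
  · simp [h]
  · simp [h, Finsupp.notMem_support_iff.mp h]

theorem smashMap_exists_of_ne_zero {Y : Type u} {Z : Type v} (y0 : Y) (z0 : Z) (g : Y → Z)
    (A : Type w) [AddCommGroup A] (f : Smash Y y0 A) {z : Z} (hz : z ≠ z0)
    (h : ((smashMap y0 z0 g A f : Smash Z z0 A) : Z →₀ A) z ≠ 0) :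
    ∃ a ∈ (f : Y →₀ A).support, g a = z := by
  classical
  rw [smashMap_apply_ne y0 z0 g A f hz] at h
  obtain ⟨a, ha, hne⟩ := Finset.exists_ne_zero_of_sum_ne_zero h
  refine ⟨a, ha, ?_⟩
  by_contra hc
  rw [if_neg hc] at hne
  exact hne rfl
noncomputable section Constr2
open scoped Classical

variable {ι : Type}

def sing (i : ι) : TT ι := ⟨{i}, Finset.singleton_nonempty i⟩

def phi (ι : Type) (A : Type) [AddCommGroup A] : glim (FF ι) A →+ (ι → A) where
  toFun h := fun i => (h.1 (Opposite.op (sing i))).1 (some ⟨i, Finset.mem_singleton_self i⟩)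
  map_zero' := by funext i; rfl
  map_add' h h' := by funext i; rfl

def liftF (A : Type) [AddCommGroup A] (v : ι → A) (s : Finset ι) :
    Option {x // x ∈ s} →₀ A :=
  Finsupp.equivFunOnFinite.symm (fun o => o.elim 0 fun x => v x.1)

theorem liftF_apply (A : Type) [AddCommGroup A] (v : ι → A) (s : Finset ι)
    (o : Option {x // x ∈ s}) : liftF A v s o = o.elim 0 fun x => v x.1 := rfl

theorem hv_mem (A : Type) [AddCommGroup A] (v : ι → A) :
    (fun d : (TT ι)ᵒᵖ =>
      (⟨liftF A v d.unop.1, rfl⟩ :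
        Smash ((FF ι).obj d).X ((FF ι).obj d).point A)) ∈ glim (FF ι) A := by
  intro d d' u
  apply Subtype.ext
  apply Finsupp.ext
  intro z
  have hsub : d'.unop.1 ⊆ d.unop.1 := leOfHom u.unop
  cases z with
  | none =>
    exact ((smashMap ((FF ι).obj d).point ((FF ι).obj d').point ((FF ι).map u).toFun A) _).2
  | some y =>
    have hy : y.1 ∈ d.unop.1 := hsub y.2
    have ha : ((FF ι).map u).toFun (some ⟨y.1, hy⟩) = some y :=
      (res_some hsub ⟨y.1, hy⟩).trans (dif_pos y.2)
    have hu : ∀ a, ((FF ι).map u).toFun a = some y → a = some ⟨y.1, hy⟩ := by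
      intro a hga
      have hga' : res hsub a = some y := hga
      cases a with
      | none => exact absurd hga' (by rw [res_none]; exact fun h => nomatch h)
      | some x =>
        rw [res_some] at hga'
        by_cases hx : x.1 ∈ d'.unop.1
        · rw [dif_pos hx] at hga'
          have hxy : x.1 = y.1 := congrArg (fun o => o.elim x.1 Subtype.val) hga'
          exact congrArg Option.some (Subtype.ext hxy)
        · rw [dif_neg hx] at hga'
          exact absurd hga' (fun h => nomatch h)
    rw [smashMap_apply_unique ((FF ι).obj d).point ((FF ι).obj d').point
      ((FF ι).map u).toFun A _ (Option.some_ne_none y) (some ⟨y.1, hy⟩) ha hu]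
    rfl

theorem phi_surjective (A : Type) [AddCommGroup A] :
    Function.Surjective (phi ι A) := by
  intro v
  exact ⟨⟨_, hv_mem A v⟩, funext fun i => rfl⟩

end Constr2
noncomputable section Constr3
open scoped Classical

variable {ι : Type}

theorem plim_unique_index (x : plim (FF ι)) {i j : ι}
    (hi : x.1 (Opposite.op (sing i)) = some ⟨i, Finset.mem_singleton_self i⟩)
    (hj : x.1 (Opposite.op (sing j)) = some ⟨j, Finset.mem_singleton_self j⟩) :
    i = j := by
  set t : TT ι := ⟨insert i {j}, Finset.insert_nonempty i {j}⟩ with ht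
  have hit : sing i ≤ t := by
    show ({i} : Finset ι) ⊆ insert i {j}
    simp
  have hjt : sing j ≤ t := by
    show ({j} : Finset ι) ⊆ insert i {j}
    intro a ha
    simp only [Finset.mem_singleton] at ha
    simp [ha]
  have hxi := x.2 ((CategoryTheory.homOfLE hit).op :
    Opposite.op t ⟶ Opposite.op (sing i))
  have hxj := x.2 ((CategoryTheory.homOfLE hjt).op :
    Opposite.op t ⟶ Opposite.op (sing j))
  rw [hi] at hxi
  rw [hj] at hxj
  have hxi' : res hit (x.1 (Opposite.op t)) = some ⟨i, Finset.mem_singleton_self i⟩ := hxi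
  have hxj' : res hjt (x.1 (Opposite.op t)) = some ⟨j, Finset.mem_singleton_self j⟩ := hxj
  cases hw : x.1 (Opposite.op t) with
  | none =>
    rw [hw, res_none] at hxi'
    exact absurd hxi' (fun h => nomatch h)
  | some w =>
    rw [hw, res_some] at hxi'
    rw [hw, res_some] at hxj'
    have hwi : w.1 = i := by
      by_cases h : w.1 ∈ (sing i).1
      · exact Finset.mem_singleton.mp h
      · rw [dif_neg h] at hxi'
        exact absurd hxi' (fun h' => nomatch h')
    have hwj : w.1 = j := by
      by_cases h : w.1 ∈ (sing j).1
      · exact Finset.mem_singleton.mp h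
      · rw [dif_neg h] at hxj'
        exact absurd hxj' (fun h' => nomatch h')
    exact hwi ▸ hwj

theorem phi_rho_mem (A : Type) [AddCommGroup A]
    (f : Smash (plim (FF ι)) (plimPt (FF ι)) A) :
    phi ι A (rho (FF ι) A f) ∈ (Finsupp.coeFnAddHom (ι := ι) (M := A)).range := by
  set w : ι → A := phi ι A (rho (FF ι) A f) with hw
  have hkey : ∀ i, w i ≠ 0 → ∃ x : plim (FF ι), x ∈ f.1.support ∧
      x.1 (Opposite.op (sing i)) = some ⟨i, Finset.mem_singleton_self i⟩ := by
    intro i hne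
    exact smashMap_exists_of_ne_zero (plimPt (FF ι))
      ((FF ι).obj (Opposite.op (sing i))).point
      (fun x : plim (FF ι) => x.1 (Opposite.op (sing i))) A f
      (z := some ⟨i, Finset.mem_singleton_self i⟩) (Option.some_ne_none _) hne
  have hfin : (Function.support w).Finite := by
    have hinj : ∃ ψ : Function.support w → f.1.support,
        Function.Injective ψ := by
      refine ⟨fun ip => ⟨(hkey ip.1 ip.2).choose, (hkey ip.1 ip.2).choose_spec.1⟩, ?_⟩
      intro a b hab
      have ha := (hkey a.1 a.2).choose_spec.2
      have hb := (hkey b.1 b.2).choose_spec.2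
      have : (hkey a.1 a.2).choose = (hkey b.1 b.2).choose := congrArg Subtype.val hab
      rw [this] at ha
      exact Subtype.ext (plim_unique_index _ ha hb)
    obtain ⟨ψ, hψ⟩ := hinj
    haveI : Finite (Function.support w) := Finite.of_injective ψ hψ
    exact Set.toFinite _
  exact ⟨Finsupp.ofSupportFinite w hfin, rfl⟩

end Constr3
theorem cotorsion_of_surj {C C' : Type*} [AddCommGroup C] [AddCommGroup C'] (φ : C →+ C')
    (hs : Function.Surjective φ) (h : Cotorsion C) : Cotorsion C' := by
  intro a
  choose b hb using fun n => hs (a n)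
  obtain ⟨x, hx⟩ := h b
  exact ⟨fun n => φ (x n), fun n => by rw [← map_nsmul, ← map_sub, hx, hb]⟩

theorem prod_quot_not_cotorsion {A : Type} [AddCommGroup A] (hA : ¬ Cotorsion A)
    (ι : Type) [Uncountable ι] :
    ¬ Cotorsion ((ι → A) ⧸ (Finsupp.coeFnAddHom (ι := ι) (M := A)).range) := by
  intro hC
  apply hA
  intro a
  set H := (Finsupp.coeFnAddHom (ι := ι) (M := A)).range with hH
  obtain ⟨x, hx⟩ := hC (fun n => QuotientAddGroup.mk' H (fun _ => a n))
  choose y hy using fun n => QuotientAddGroup.mk'_surjective H (x n)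
  have key : ∀ n, ∃ g : ι →₀ A, ⇑g = (y n - (n + 1) • y (n + 1)) - (fun _ => a n) := by
    intro n
    have h0 : QuotientAddGroup.mk' H ((y n - (n + 1) • y (n + 1)) - fun _ => a n) = 0 := by
      rw [map_sub, map_sub, map_nsmul, hy, hy, hx n, sub_self]
    have hmem : ((y n - (n + 1) • y (n + 1)) - fun _ => a n) ∈ H :=
      (QuotientAddGroup.eq_zero_iff _).mp h0
    exact AddMonoidHom.mem_range.mp hmem
  choose g hg using key
  have hS : (⋃ n, ((g n).support : Set ι)).Countable :=
    Set.countable_iUnion fun n => (g n).support.finite_toSet.countable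
  have hex : ∃ i, i ∉ ⋃ n, ((g n).support : Set ι) := by
    by_contra h
    push_neg at h
    rw [Set.eq_univ_of_forall h, Set.countable_univ_iff] at hS
    exact (not_countable (α := ι)) hS
  obtain ⟨i, hi⟩ := hex
  refine ⟨fun n => y n i, fun n => ?_⟩
  have h1 := congrFun (hg n) i
  have h0 : g n i = 0 := Finsupp.notMem_support_iff.mp
    (fun h => hi (Set.mem_iUnion.mpr ⟨n, h⟩))
  rw [h0] at h1
  have h2 : y n i - (n + 1) • y (n + 1) i - a n = 0 := by
    simpa [Pi.sub_apply] using h1.symm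
  rw [sub_eq_zero] at h2
  exact h2

/-- Let `A` be an abelian group that is not cotorsion and let `λ > ℵ₀` be a cardinal.
Then there exist a directed poset `T` with `|T| = λ` and a diagram `X : Tᵒᵖ ⥤ Set_*`
of *finite* pointed sets such that the cokernel `H(X,A)` of the natural map `ρ` is
not cotorsion.  Moreover (taking `T` to be the finite nonempty subsets of `λ` and
`X(s) = s₊`, one gets `H(X,A) ≅ (∏_{α<λ} A)/(⊕_{α<λ} A)`): for every index type `ι`
of cardinality `λ`, the group `(∏_{α ∈ ι} A)/(⊕_{α ∈ ι} A)` is not cotorsion. -/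
theorem stmt19 {A : Type} [AddCommGroup A] (hA : ¬ Cotorsion A)
    (lam : Cardinal.{0}) (hlam : Cardinal.aleph0 < lam) :
    (∃ X : DirectedDiagram.{0},
        Cardinal.mk X.T = lam ∧
        (∀ d : (X.T)ᵒᵖ, Finite (X.F.obj d).X) ∧
        ¬ Cotorsion (↥(glim X.F A) ⧸ (rho X.F A).range)) ∧
    (∀ ι : Type, Cardinal.mk ι = lam →
      ¬ Cotorsion ((ι → A) ⧸ (Finsupp.coeFnAddHom (ι := ι) (M := A)).range)) := by
  have huncount : ∀ (ι : Type), Cardinal.mk ι = lam → Uncountable ι := by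
    intro ι h
    exact Cardinal.aleph0_lt_mk_iff.mp (h ▸ hlam)
  constructor
  · obtain ⟨ι, hι⟩ : ∃ ι : Type, Cardinal.mk ι = lam := ⟨lam.out, Cardinal.mk_out lam⟩
    haveI : Uncountable ι := huncount ι hι
    haveI : Infinite ι := Cardinal.infinite_iff.mpr (by rw [hι]; exact hlam.le)
    refine ⟨{ T := TT ι, F := FF ι }, ?_, ?_, ?_⟩
    · refine le_antisymm ?_ ?_
      · calc Cardinal.mk (TT ι) ≤ Cardinal.mk (Finset ι) := Cardinal.mk_subtype_le _
          _ = Cardinal.mk ι := Cardinal.mk_finset_of_infinite ι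
          _ = lam := hι
      · rw [← hι]
        exact Cardinal.mk_le_of_injective (f := fun i : ι => sing i)
          (fun a b h => Finset.singleton_injective (congrArg Subtype.val h))
    · intro d
      exact inferInstanceAs (Finite (Option {x // x ∈ d.unop.1}))
    · intro hcot
      have hle : (rho (FF ι) A).range ≤
          AddSubgroup.comap (phi ι A) (Finsupp.coeFnAddHom (ι := ι) (M := A)).range := by
        rintro c ⟨f, rfl⟩
        exact phi_rho_mem A f
      set ψ := QuotientAddGroup.map (rho (FF ι) A).range
        (Finsupp.coeFnAddHom (ι := ι) (M := A)).range (phi ι A) hle with hψ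
      have hsurj : Function.Surjective ψ := by
        intro q
        obtain ⟨u, rfl⟩ := QuotientAddGroup.mk'_surjective _ q
        obtain ⟨h, rfl⟩ := phi_surjective A u
        exact ⟨QuotientAddGroup.mk' _ h, QuotientAddGroup.map_mk' _ _ _ _ _⟩
      exact prod_quot_not_cotorsion hA ι (cotorsion_of_surj ψ hsurj hcot)
  · intro ι hι
    haveI : Uncountable ι := huncount ι hι
    exact prod_quot_not_cotorsion hA ι
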